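/- If X satisfies S₁(Γ_F, 𝒪), then C_p(X) satisfies S₁(Γ_𝟎, 𝒜_𝟎): for every sequence (Sₙ) of subsets of C_p(X), each converging pointwise to the zero function 𝟎 (i.e. Sₙ ∈ Γ_𝟎), one can choose fₙ ∈ Sₙ such that {fₙ : n ∈ ℕ} is 1-dense at 𝟎. -/

import Mathlib

open Set Filter Topology

/-- `C_p(X)`: continuous real functions with the topology of pointwise
convergence (subspace of the product topology on `X → ℝ`). -/
abbrev Cp (X : Type*) [TopologicalSpace X] : Type _ := {f : X → ℝ // Continuous f}

variable {X : Type*} [TopologicalSpace X]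

/-- The constant zero function, as an element of `C_p(X)`. -/
def zeroF (X : Type*) [TopologicalSpace X] : Cp X := ⟨fun _ => 0, continuous_const⟩

/-- A family of sets is an open cover. -/
def IsOpenCover (𝒰 : Set (Set X)) : Prop :=
  (∀ U ∈ 𝒰, IsOpen U) ∧ ⋃₀ 𝒰 = Set.univ

/-- `X` is Rothberger: `S₁(𝒪,𝒪)`. -/
def Rothberger (X : Type*) [TopologicalSpace X] : Prop :=
  ∀ 𝒰 : ℕ → Set (Set X), (∀ n, IsOpenCover (𝒰 n)) →
    ∃ V : ℕ → Set X, (∀ n, V n ∈ 𝒰 n) ∧ (⋃ n, V n) = Set.univ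

/-- `X` is Menger: `S_fin(𝒪,𝒪)`. -/
def Menger (X : Type*) [TopologicalSpace X] : Prop :=
  ∀ 𝒰 : ℕ → Set (Set X), (∀ n, IsOpenCover (𝒰 n)) →
    ∃ 𝒱 : ℕ → Set (Set X), (∀ n, 𝒱 n ⊆ 𝒰 n ∧ (𝒱 n).Finite) ∧
      ⋃₀ (⋃ n, 𝒱 n) = Set.univ

/-- `A ⊆ C_p(X)` is 1-dense. -/
def OneDense (A : Set (Cp X)) : Prop :=
  ∀ (x : X) (W : Set ℝ), IsOpen W → W.Nonempty → ∃ f ∈ A, f.1 x ∈ W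

/-- `A ⊆ C_p(X)` is 1-dense at the function `g`. -/
def OneDenseAt (g : Cp X) (A : Set (Cp X)) : Prop :=
  ∀ (x : X) (ε : ℝ), 0 < ε → ∃ h ∈ A, |h.1 x - g.1 x| < ε

/-- `A ⊆ C_p(X)` is `n`-dense. -/
def NDense (n : ℕ) (A : Set (Cp X)) : Prop :=
  ∀ (x : Fin n → X), Function.Injective x →
    ∀ (W : Fin n → Set ℝ), (∀ i, IsOpen (W i)) → (∀ i, (W i).Nonempty) →
      ∃ f ∈ A, ∀ i, f.1 (x i) ∈ W i

/-- `A ⊆ C_p(X)` is `n`-dense at the function `g`. -/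
def NDenseAt (n : ℕ) (g : Cp X) (A : Set (Cp X)) : Prop :=
  ∀ (x : Fin n → X) (ε : ℝ), 0 < ε →
    ∃ h ∈ A, ∀ i, |h.1 (x i) - g.1 (x i)| < ε

/-- `S ⊆ C_p(X)` is sequentially dense. -/
def SeqDense (S : Set (Cp X)) : Prop :=
  ∀ g : Cp X, ∃ u : ℕ → Cp X, (∀ k, u k ∈ S) ∧ Tendsto u atTop (nhds g)

/-- `S` converges to the zero function: `S ∈ Γ_𝟎`. -/
def GammaZero (S : Set (Cp X)) : Prop :=
  S.Infinite ∧ zeroF X ∉ S ∧ ∀ U ∈ nhds (zeroF X), (S \ U).Finite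

/-- A zero-set of `X`. -/
def IsZeroSet (F : Set X) : Prop := ∃ h : X → ℝ, Continuous h ∧ F = h ⁻¹' {0}

/-- A cozero set of `X`. -/
def IsCozero (U : Set X) : Prop := ∃ h : X → ℝ, Continuous h ∧ U = {x | h x ≠ 0}

/-- A sequence of sets forms a (countable) γ-cover: the family is infinite,
no member is all of `X`, and each point lies in all but finitely many members. -/
def IsGammaSeq (U : ℕ → Set X) : Prop :=
  (Set.range U).Infinite ∧ (∀ n, U n ≠ Set.univ) ∧
    ∀ x : X, ∀ᶠ n in atTop, x ∈ U n

/-- A countable γ-cover of cozero sets which is γ_F-shrinkable: there are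
zero-sets `F n ⊆ U n` forming a γ-cover of `X`. -/
def GammaFShrinkable (U : ℕ → Set X) : Prop :=
  (∀ n, IsCozero (U n)) ∧ IsGammaSeq U ∧
    ∃ F : ℕ → Set X, (∀ n, IsZeroSet (F n)) ∧ (∀ n, F n ⊆ U n) ∧ IsGammaSeq F

/-- `X` satisfies `S₁(Γ_F, 𝒪)`. -/
def S1GammaFO (X : Type*) [TopologicalSpace X] : Prop :=
  ∀ U : ℕ → ℕ → Set X, (∀ i, GammaFShrinkable (U i)) →
    ∃ m : ℕ → ℕ, (⋃ i, U i (m i)) = Set.univ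


private lemma ev_eventually {X : Type*} [TopologicalSpace X]
    {S : Set (Cp X)} (hS : GammaZero S) (g : ℕ → Cp X)
    (hinj : Function.Injective g) (hgS : ∀ j, g j ∈ S) (x : X) {δ : ℝ} (hδ : 0 < δ) :
    ∀ᶠ j in atTop, |(g j).1 x| < δ := by
  have hc : Continuous fun h : Cp X => h.1 x :=
    (continuous_apply x).comp continuous_subtype_val
  have hV : {h : Cp X | |h.1 x| < δ} ∈ nhds (zeroF X) := by
    have hopen : IsOpen {h : Cp X | |h.1 x| < δ} := by
      have : {h : Cp X | |h.1 x| < δ} = (fun h : Cp X => h.1 x) ⁻¹' (abs ⁻¹' Set.Iio δ) := rfl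
      rw [this]
      exact ((isOpen_Iio.preimage continuous_abs)).preimage hc
    refine hopen.mem_nhds ?_
    simp [zeroF, hδ]
  have hfin := hS.2.2 _ hV
  have hfin2 : {j : ℕ | ¬ |(g j).1 x| < δ}.Finite := by
    have hsub : {j : ℕ | ¬ |(g j).1 x| < δ} ⊆ g ⁻¹' (S \ {h : Cp X | |h.1 x| < δ}) := by
      intro j hj
      exact ⟨hgS j, hj⟩
    exact (hfin.preimage hinj.injOn).subset hsub
  rw [← Nat.cofinite_eq_atTop, Filter.eventually_cofinite]
  exact hfin2

private lemma pigeon {α : Type*} (U : ℕ → Set α) (hne : ∀ j, U j ≠ Set.univ)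
    (hev : ∀ x, ∀ᶠ j in atTop, x ∈ U j) : (Set.range U).Infinite := by
  intro hfin
  haveI : Finite ↥(Set.range U) := hfin
  obtain ⟨V, hV⟩ := Finite.exists_infinite_fiber
    (fun j : ℕ => (⟨U j, Set.mem_range_self j⟩ : ↥(Set.range U)))
  have hVinf : {j : ℕ | (⟨U j, Set.mem_range_self j⟩ : ↥(Set.range U)) = V}.Infinite := by
    rw [← Set.infinite_coe_iff]
    exact hV
  have hVuniv : V.1 = Set.univ := by
    ext x
    simp only [Set.mem_univ, iff_true]
    obtain ⟨N, hN⟩ := (hev x).exists_forall_of_atTop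
    obtain ⟨j, hj, hjN⟩ := hVinf.exists_gt N
    have : U j = V.1 := congrArg Subtype.val hj
    exact this ▸ hN j hjN.le
  obtain ⟨j0, hj0⟩ := hVinf.nonempty
  exact hne j0 ((congrArg Subtype.val hj0).trans hVuniv)

private lemma cover_shrinkable {X : Type*} [TopologicalSpace X]
    {S : Set (Cp X)} (hS : GammaZero S) {ε : ℝ} (hε : 0 < ε)
    (hT : {f : Cp X | f ∈ S ∧ ∃ x, ε ≤ |f.1 x|}.Infinite) :
    ∃ g : ℕ → Cp X, (∀ j, g j ∈ S) ∧
      GammaFShrinkable (fun j => {x | |(g j).1 x| < ε}) := by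
  set T := {f : Cp X | f ∈ S ∧ ∃ x, ε ≤ |f.1 x|} with hTdef
  let e := hT.natEmbedding
  set g : ℕ → Cp X := fun j => (e j).1 with hg
  have hinj : Function.Injective g := Subtype.val_injective.comp e.injective
  have hgT : ∀ j, g j ∈ T := fun j => (e j).2
  have hgS : ∀ j, g j ∈ S := fun j => (hgT j).1
  have hUne : ∀ j, {x | |(g j).1 x| < ε} ≠ Set.univ := by
    intro j hcon
    obtain ⟨x, hx⟩ := (hgT j).2
    have : x ∈ {x | |(g j).1 x| < ε} := hcon ▸ Set.mem_univ x
    exact absurd hx (not_le.mpr this)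
  have hUev : ∀ x : X, ∀ᶠ j in atTop, x ∈ {x | |(g j).1 x| < ε} :=
    fun x => ev_eventually hS g hinj hgS x hε
  have hFev : ∀ x : X, ∀ᶠ j in atTop, x ∈ {x | |(g j).1 x| ≤ ε / 2} := by
    intro x
    filter_upwards [ev_eventually hS g hinj hgS x (half_pos hε)] with j hj
    exact hj.le
  have hFsub : ∀ j, {x | |(g j).1 x| ≤ ε / 2} ⊆ {x | |(g j).1 x| < ε} := by
    intro j x hx
    exact lt_of_le_of_lt hx (half_lt_self hε)
  have hFne : ∀ j, {x | |(g j).1 x| ≤ ε / 2} ≠ Set.univ := by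
    intro j hcon
    exact hUne j (Set.eq_univ_of_univ_subset (hcon ▸ hFsub j))
  refine ⟨g, hgS, ?_, ⟨pigeon _ hUne hUev, hUne, hUev⟩,
    fun j => {x | |(g j).1 x| ≤ ε / 2}, ?_, hFsub, pigeon _ hFne hFev, hFne, hFev⟩
  · -- cozero
    intro j
    refine ⟨fun x => max (ε - |(g j).1 x|) 0, (continuous_const.sub (g j).2.abs).max continuous_const, ?_⟩
    ext x
    simp only [Set.mem_setOf_eq]
    constructor
    · intro hx
      have h1 : 0 < ε - |(g j).1 x| := by linarith
      rw [max_eq_left h1.le]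
      exact ne_of_gt h1
    · intro hx
      by_contra hcon
      push_neg at hcon
      exact hx (max_eq_right (by linarith))
  · -- zero sets
    intro j
    refine ⟨fun x => max (|(g j).1 x| - ε / 2) 0, ((g j).2.abs.sub continuous_const).max continuous_const, ?_⟩
    ext x
    simp only [Set.mem_setOf_eq, Set.mem_preimage, Set.mem_singleton_iff]
    rw [max_eq_right_iff]
    constructor <;> intro hx <;> linarith

/-- If `X` satisfies `S₁(Γ_F,𝒪)` then `C_p(X)` satisfies `S₁(Γ_𝟎, 𝒜_𝟎)`. -/
theorem stmt14 (X : Type*) [TopologicalSpace X] [T35Space X] (h : S1GammaFO X) :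
    ∀ S : ℕ → Set (Cp X), (∀ n, GammaZero (S n)) →
      ∃ f : ℕ → Cp X, (∀ n, f n ∈ S n) ∧ OneDenseAt (zeroF X) (Set.range f) := by
  intro S hS
  have block : ∀ k : ℕ, ∃ g : ℕ → Cp X, (∀ i, g i ∈ S (Nat.pair k i)) ∧
      ∀ x : X, ∃ i, |(g i).1 x| < 1 / (k + 1 : ℝ) := by
    intro k
    set ε : ℝ := 1 / (k + 1 : ℝ) with hεdef
    have hε : 0 < ε := by positivity
    by_cases hcase : ∀ i : ℕ, {f : Cp X | f ∈ S (Nat.pair k i) ∧ ∃ x, ε ≤ |f.1 x|}.Infinite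
    · choose G hG1 hG2 using fun i => cover_shrinkable (hS (Nat.pair k i)) hε (hcase i)
      obtain ⟨m, hm⟩ := h (fun i j => {x | |(G i j).1 x| < ε}) hG2
      refine ⟨fun i => G i (m i), fun i => hG1 i (m i), fun x => ?_⟩
      have : x ∈ ⋃ i, {x | |(G i (m i)).1 x| < ε} := hm ▸ Set.mem_univ x
      obtain ⟨_, ⟨i, rfl⟩, hx⟩ := this
      exact ⟨i, hx⟩
    · push_neg at hcase
      obtain ⟨i0, hi0⟩ := hcase
      have hdiff : ((S (Nat.pair k i0)) \
          {f : Cp X | f ∈ S (Nat.pair k i0) ∧ ∃ x, ε ≤ |f.1 x|}).Infinite :=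
        (hS (Nat.pair k i0)).1.diff hi0
      obtain ⟨f0, hf0⟩ := hdiff.nonempty
      have hf0S : f0 ∈ S (Nat.pair k i0) := hf0.1
      have hf0small : ∀ x, |f0.1 x| < ε := by
        intro x
        by_contra hcon
        push_neg at hcon
        exact hf0.2 ⟨hf0S, x, hcon⟩
      refine ⟨fun i => if i = i0 then f0 else ((hS (Nat.pair k i)).1.nonempty).choose,
        fun i => ?_, fun x => ⟨i0, by simp [hf0small x]⟩⟩
      by_cases hi : i = i0
      · subst hi; simp [hf0S]
      · simp only [hi, if_false]
        exact ((hS (Nat.pair k i)).1.nonempty).choose_spec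
  choose g hg1 hg2 using block
  refine ⟨fun n => g n.unpair.1 n.unpair.2, fun n => ?_, fun x ε hε => ?_⟩
  · have := hg1 n.unpair.1 n.unpair.2
    rwa [Nat.pair_unpair] at this
  · obtain ⟨k, hk⟩ := exists_nat_one_div_lt hε
    obtain ⟨i, hi⟩ := hg2 k x
    refine ⟨g k i, ⟨Nat.pair k i, by simp [Nat.unpair_pair]⟩, ?_⟩
    simp only [zeroF, sub_zero]
    exact hi.trans hk
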